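/- Let k ≥ 2. Then the series Σ_{i=1}^{∞} i·u_i·k^{−2i} converges, and the expected value of lso(u,v) over all ordered pairs (u,v) of length-n words over Σ_k converges to it: lim_{n→∞} k^{−2n}·Σ_{(u,v) ∈ Σ_k^n × Σ_k^n} lso(u,v) = Σ_{i=1}^{∞} i·u_i·k^{−2i}. In particular, the expected value of lso(u,v) is O(1) as n → ∞. Moreover, for every n ≥ 1, Σ_{i=1}^{n} i·u_i·k^{−2i} ≤ Σ_{i=1}^{∞} i·u_i·k^{−2i} ≤ (Σ_{i=1}^{n} i·u_i·k^{−2i}) + k^{−n}·(k(n+1)−n)/(k−1)^2. -/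

import Mathlib

open Classical Finset Filter

/-- A border of `w`: a non-empty word that is both a proper prefix and a suffix of `w`. -/
def IsBorder {k : ℕ} (w b : List (Fin k)) : Prop :=
  b ≠ [] ∧ b ≠ w ∧ b <+: w ∧ b <:+ w

/-- A word is unbordered if it has no border. -/
def Unbordered {k : ℕ} (w : List (Fin k)) : Prop :=
  ∀ b, ¬ IsBorder w b

/-- A right-border of `(u,v)`: a non-empty proper suffix of `u` that is a proper prefix of `v`. -/
def IsRightBorder {k : ℕ} (u v b : List (Fin k)) : Prop :=
  b ≠ [] ∧ b <:+ u ∧ b ≠ u ∧ b <+: v ∧ b ≠ v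

/-- A left-border of `(u,v)`: a non-empty proper prefix of `u` that is a proper suffix of `v`. -/
def IsLeftBorder {k : ℕ} (u v b : List (Fin k)) : Prop :=
  b ≠ [] ∧ b <+: u ∧ b ≠ u ∧ b <:+ v ∧ b ≠ v

def MutuallyBordered {k : ℕ} (u v : List (Fin k)) : Prop :=
  (∃ b, IsRightBorder u v b) ∧ (∃ b, IsLeftBorder u v b)

def MutuallyUnbordered {k : ℕ} (u v : List (Fin k)) : Prop :=
  (¬ ∃ b, IsRightBorder u v b) ∧ (¬ ∃ b, IsLeftBorder u v b)

def RightBordered {k : ℕ} (u v : List (Fin k)) : Prop :=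
  (∃ b, IsRightBorder u v b) ∧ (¬ ∃ b, IsLeftBorder u v b)

/-- `lso u v`: the length of the shortest right-border of `(u,v)`, or `0` if there is none. -/
noncomputable def lso {k : ℕ} (u v : List (Fin k)) : ℕ :=
  sInf {m | ∃ b : List (Fin k), IsRightBorder u v b ∧ b.length = m}

def IsShortestRightBorder {k : ℕ} (u v b : List (Fin k)) : Prop :=
  IsRightBorder u v b ∧ ∀ b', IsRightBorder u v b' → b.length ≤ b'.length

def IsShortestLeftBorder {k : ℕ} (u v b : List (Fin k)) : Prop :=
  IsLeftBorder u v b ∧ ∀ b', IsLeftBorder u v b' → b.length ≤ b'.length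

/-- The finite set of all length-`n` words over `Σ_k`. -/
def Words (k n : ℕ) : Finset (List (Fin k)) :=
  (Finset.univ : Finset (Fin n → Fin k)).image List.ofFn

/-- `UB k n`: the number of unbordered words of length `n` over `Σ_k`. -/
noncomputable def UB (k n : ℕ) : ℕ :=
  ((Words k n).filter Unbordered).card

/-- `M k n`: the number of mutually bordered pairs of length-`n` words over `Σ_k`. -/
noncomputable def M (k n : ℕ) : ℕ :=
  ((Words k n ×ˢ Words k n).filter (fun p => MutuallyBordered p.1 p.2)).card

/-- `R k n`: the number of right-bordered pairs of length-`n` words over `Σ_k`. -/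
noncomputable def R (k n : ℕ) : ℕ :=
  ((Words k n ×ˢ Words k n).filter (fun p => RightBordered p.1 p.2)).card

/-- `U k n`: the number of mutually unbordered pairs of length-`n` words over `Σ_k`. -/
noncomputable def U (k n : ℕ) : ℕ :=
  ((Words k n ×ˢ Words k n).filter (fun p => MutuallyUnbordered p.1 p.2)).card

/-- `G u v m`: the number of unbordered words of length `m` over `Σ_k` having
`u` as a prefix and `v` as a suffix. -/
noncomputable def G {k : ℕ} (u v : List (Fin k)) (m : ℕ) : ℕ :=
  ((Words k m).filter (fun w => Unbordered w ∧ u <+: w ∧ v <:+ w)).card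

lemma mem_words {k n : ℕ} {w : List (Fin k)} : w ∈ Words k n ↔ w.length = n := by
  simp only [Words, Finset.mem_image, Finset.mem_univ, true_and]
  constructor
  · rintro ⟨f, rfl⟩; simp
  · rintro rfl; exact ⟨w.get, List.ofFn_get w⟩

lemma card_words (k n : ℕ) : (Words k n).card = k ^ n := by
  rw [Words, Finset.card_image_of_injective _ List.ofFn_injective]
  simp

lemma ub_le (k n : ℕ) : UB k n ≤ k ^ n := by
  rw [← card_words k n]
  exact Finset.card_filter_le _ _

-- prefix of append, short
lemma prefix_of_prefix_append {k : ℕ} {c b v : List (Fin k)} (h : c <+: b ++ v)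
    (hl : c.length ≤ b.length) : c <+: b := by
  rw [List.prefix_iff_eq_take] at h ⊢
  rwa [List.take_append_of_le_length hl] at h

lemma suffix_of_suffix_append {k : ℕ} {c b u : List (Fin k)} (h : c <:+ u ++ b)
    (hl : c.length ≤ b.length) : c <:+ b := by
  rw [← List.reverse_prefix] at h ⊢
  rw [List.reverse_append] at h
  exact prefix_of_prefix_append (by simpa using h) (by simpa using hl)

lemma lso_concat {k : ℕ} {b u' v' : List (Fin k)} (hb : Unbordered b) (hbne : b ≠ [])
    (hu' : u' ≠ []) (hv' : v' ≠ []) : lso (u' ++ b) (b ++ v') = b.length := by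
  have hmem : b.length ∈ {m | ∃ c : List (Fin k), IsRightBorder (u' ++ b) (b ++ v') c ∧ c.length = m} := by
    refine ⟨b, ⟨hbne, List.suffix_append u' b, ?_, List.prefix_append b v', ?_⟩, rfl⟩
    · intro h; have := congrArg List.length h; simp at this
      exact hu' this.symm.symm
    · intro h; have := congrArg List.length h; simp at this
      exact hv' this.symm.symm
  refine le_antisymm (Nat.sInf_le hmem) (le_csInf ⟨_, hmem⟩ ?_)
  rintro m ⟨c, ⟨hc0, hcu, hcnu, hcv, hcnv⟩, rfl⟩
  by_contra hlt
  push_neg at hlt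
  have hcb : c <+: b := prefix_of_prefix_append hcv hlt.le
  have hcb' : c <:+ b := suffix_of_suffix_append hcu hlt.le
  exact hb c ⟨hc0, fun h => by simp [h] at hlt, hcb, hcb'⟩

lemma lso_lt {k : ℕ} {u v : List (Fin k)} (hn : 1 ≤ u.length) : lso u v < u.length := by
  rcases Set.eq_empty_or_nonempty {m | ∃ c : List (Fin k), IsRightBorder u v c ∧ c.length = m} with h | h
  · rw [lso, h, Nat.sInf_empty]; exact hn
  · obtain ⟨c, ⟨_, hcu, hcnu, _, _⟩, hlen⟩ := Nat.sInf_mem h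
    rw [lso, ← hlen]
    exact lt_of_le_of_ne (hcu.length_le) (fun he => hcnu (hcu.eq_of_length he))

lemma lso_decomp {k : ℕ} {u v : List (Fin k)} (h : 1 ≤ lso u v) :
    ∃ b, IsRightBorder u v b ∧ b.length = lso u v ∧ Unbordered b := by
  have hne : {m | ∃ c : List (Fin k), IsRightBorder u v c ∧ c.length = m}.Nonempty := by
    by_contra hc
    rw [Set.not_nonempty_iff_eq_empty] at hc
    rw [lso, hc] at h; simp at h
  obtain ⟨b, hrb, hlen⟩ := Nat.sInf_mem hne
  refine ⟨b, hrb, hlen, ?_⟩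
  rintro c ⟨hc0, hcnb, hcb, hcb'⟩
  obtain ⟨hb0, hbu, hbnu, hbv, hbnv⟩ := hrb
  have hclt : c.length < b.length :=
    lt_of_le_of_ne hcb.length_le (fun he => hcnb (hcb.eq_of_length he))
  have hlen' : b.length = lso u v := hlen
  have : lso u v ≤ c.length := Nat.sInf_le ⟨c, ⟨hc0, hcb'.trans hbu,
    fun h => by subst h; exact absurd hbu.length_le (by omega),
    hcb.trans hbv,
    fun h => by subst h; exact absurd hbv.length_le (by omega)⟩, rfl⟩
  omega

lemma card_fiber (k n i : ℕ) (hi : 1 ≤ i) (hin : i < n) :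
    ((Words k n ×ˢ Words k n).filter (fun p => lso p.1 p.2 = i)).card
      = UB k i * (k ^ (n - i) * k ^ (n - i)) := by
  have hcard : (((Words k i).filter Unbordered) ×ˢ (Words k (n - i) ×ˢ Words k (n - i))).card
      = UB k i * (k ^ (n - i) * k ^ (n - i)) := by
    simp [Finset.card_product, UB, card_words]
  rw [← hcard]
  apply Finset.card_nbij'
    (i := fun p => (p.1.drop (n - i), (p.1.take (n - i), p.2.drop i)))
    (j := fun q => (q.2.1 ++ q.1, q.1 ++ q.2.2))
  · -- forward membership
    rintro ⟨u, v⟩ hp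
    change (u, v) ∈ (Words k n ×ˢ Words k n).filter (fun p => lso p.1 p.2 = i) at hp
    simp only [Finset.mem_coe, Finset.mem_filter, Finset.mem_product] at hp ⊢
    obtain ⟨⟨hu, hv⟩, hlso⟩ := hp
    rw [mem_words] at hu hv
    obtain ⟨b, ⟨hb0, hbu, _, hbv, _⟩, hblen, hbub⟩ := lso_decomp (k := k) (u := u) (v := v) (by omega)
    rw [hlso] at hblen
    have hbu' : b = u.drop (n - i) := by
      rw [List.suffix_iff_eq_drop] at hbu; rw [hbu, hu, hblen]
    have hbv' : b = v.take i := by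
      rw [List.prefix_iff_eq_take] at hbv; rw [hbv, hblen]
    refine ⟨⟨?_, ?_⟩, ?_, ?_⟩
    · rw [mem_words, ← hbu']; exact hblen
    · rw [← hbu']; exact hbub
    · rw [mem_words, List.length_take, hu]; omega
    · rw [mem_words, List.length_drop, hv]
  · -- backward membership
    rintro ⟨b, u', v'⟩ hq
    change (b, u', v') ∈ ((Words k i).filter Unbordered) ×ˢ (Words k (n - i) ×ˢ Words k (n - i)) at hq
    simp only [Finset.mem_coe, Finset.mem_filter, Finset.mem_product, mem_words] at hq ⊢
    obtain ⟨⟨hb, hbub⟩, hu', hv'⟩ := hq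
    have h0b : b ≠ [] := by intro h; rw [h] at hb; simp at hb; omega
    have h0u : u' ≠ [] := by intro h; rw [h] at hu'; simp at hu'; omega
    have h0v : v' ≠ [] := by intro h; rw [h] at hv'; simp at hv'; omega
    refine ⟨⟨by rw [List.length_append, hu', hb]; omega, by rw [List.length_append, hv', hb]; omega⟩, ?_⟩
    rw [lso_concat hbub h0b h0u h0v, hb]
  · -- left inverse
    rintro ⟨u, v⟩ hp
    change (u, v) ∈ (Words k n ×ˢ Words k n).filter (fun p => lso p.1 p.2 = i) at hp
    simp only [Finset.mem_filter, Finset.mem_product, mem_words] at hp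
    obtain ⟨⟨hu, hv⟩, hlso⟩ := hp
    obtain ⟨b, ⟨hb0, hbu, _, hbv, _⟩, hblen, hbub⟩ := lso_decomp (k := k) (u := u) (v := v) (by omega)
    rw [hlso] at hblen
    have hbu' : b = u.drop (n - i) := by
      rw [List.suffix_iff_eq_drop] at hbu; rw [hbu, hu, hblen]
    have hbv' : b = v.take i := by
      rw [List.prefix_iff_eq_take] at hbv; rw [hbv, hblen]
    simp only [Prod.mk.injEq]
    exact ⟨List.take_append_drop _ u, by rw [← hbu', hbv']; exact List.take_append_drop i v⟩
  · -- right inverse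
    rintro ⟨b, u', v'⟩ hq
    change (b, u', v') ∈ ((Words k i).filter Unbordered) ×ˢ (Words k (n - i) ×ˢ Words k (n - i)) at hq
    simp only [Finset.mem_filter, Finset.mem_product, mem_words] at hq
    obtain ⟨⟨hb, hbub⟩, hu', hv'⟩ := hq
    simp only [Prod.mk.injEq]
    exact ⟨List.drop_left' hu', List.take_left' hu', List.drop_left' hb⟩

lemma sum_lso (k n : ℕ) (hn : 1 ≤ n) :
    ∑ p ∈ Words k n ×ˢ Words k n, lso p.1 p.2
      = ∑ i ∈ Finset.range n, i * (UB k i * (k ^ (n - i) * k ^ (n - i))) := by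
  have hmaps : ∀ p ∈ Words k n ×ˢ Words k n, lso p.1 p.2 ∈ Finset.range n := by
    rintro ⟨u, v⟩ hp
    rw [Finset.mem_product] at hp
    rw [Finset.mem_range]
    have hu : u.length = n := mem_words.mp hp.1
    have h2 := lso_lt (u := u) (v := v) (by omega)
    simpa [hu] using h2
  rw [← Finset.sum_fiberwise_of_maps_to hmaps]
  apply Finset.sum_congr rfl
  intro i hi
  rw [Finset.mem_range] at hi
  have : ∑ p ∈ (Words k n ×ˢ Words k n).filter (fun p => lso p.1 p.2 = i), lso p.1 p.2
      = ((Words k n ×ˢ Words k n).filter (fun p => lso p.1 p.2 = i)).card * i := by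
    rw [Finset.sum_congr rfl (fun p hp => (Finset.mem_filter.mp hp).2), Finset.sum_const,
      smul_eq_mul]
  rw [this]
  rcases Nat.eq_zero_or_pos i with rfl | hi1
  · simp
  · rw [card_fiber k n i hi1 hi, mul_comm]

section Analysis

variable {k : ℕ}

lemma hk1R (hk : 2 ≤ k) : (1:ℝ) < (k:ℝ) := by exact_mod_cast lt_of_lt_of_le one_lt_two (by exact_mod_cast hk)

lemma hkne (hk : 2 ≤ k) : (k:ℝ) ≠ 0 := by positivity

lemma hrlt (hk : 2 ≤ k) : ‖((k:ℝ))⁻¹‖ < 1 := by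
  rw [Real.norm_eq_abs, abs_of_nonneg (by positivity)]
  rw [inv_lt_one_iff₀]
  right; exact hk1R hk

noncomputable def fF (k : ℕ) (i : ℕ) : ℝ := ((i + 1 : ℕ) : ℝ) * (UB k (i + 1) : ℝ) / (k : ℝ) ^ (2 * (i + 1))

lemma fF_nonneg (k i : ℕ) : 0 ≤ fF k i := by unfold fF; positivity

lemma fF_le (hk : 2 ≤ k) (i : ℕ) : fF k i ≤ ((i:ℝ) + 1) * ((k:ℝ)⁻¹) ^ (i + 1) := by
  have hkpos : (0:ℝ) < (k:ℝ) := by positivity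
  have h1 : fF k i ≤ ((i:ℝ) + 1) * (k:ℝ) ^ (i+1) / (k:ℝ) ^ (2 * (i + 1)) := by
    unfold fF
    gcongr
    · norm_cast
    · exact_mod_cast ub_le k (i+1)
  refine h1.trans_eq ?_
  rw [show 2 * (i+1) = (i+1) + (i+1) from by ring, pow_add, inv_pow]
  field_simp
  ring

lemma summable_g (hk : 2 ≤ k) : Summable (fun j : ℕ => ((j:ℝ) + 1) * ((k:ℝ)⁻¹) ^ (j + 1)) := by
  have hg : Summable (fun n : ℕ => (n:ℝ) * ((k:ℝ)⁻¹) ^ n) := by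
    simpa only [pow_one] using summable_pow_mul_geometric_of_norm_lt_one 1 (hrlt hk)
  have := (summable_nat_add_iff (f := fun n : ℕ => (n:ℝ) * ((k:ℝ)⁻¹) ^ n) 1).2 hg
  refine this.congr fun j => by push_cast; ring

lemma summable_fF (hk : 2 ≤ k) : Summable (fF k) :=
  Summable.of_nonneg_of_le (fF_nonneg k) (fF_le hk) (summable_g hk)

/-- tail sum computation -/
lemma tail_sum (hk : 2 ≤ k) (n : ℕ) :
    ∑' j : ℕ, (((j + n : ℕ):ℝ) + 1) * ((k:ℝ)⁻¹) ^ (j + n + 1)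
      = (1 / (k : ℝ) ^ n) * (((k : ℝ) * (n + 1) - n) / ((k : ℝ) - 1) ^ 2) := by
  set x : ℝ := ((k:ℝ))⁻¹ with hx
  have hx0 : (0:ℝ) ≤ x := by positivity
  have hx1 : x < 1 := by simpa [Real.norm_eq_abs, abs_of_nonneg hx0] using hrlt hk
  have hgeo : Summable (fun j : ℕ => x ^ j) := summable_geometric_of_lt_one hx0 hx1
  have hlin : Summable (fun j : ℕ => (j:ℝ) * x ^ j) := by
    simpa only [pow_one] using summable_pow_mul_geometric_of_norm_lt_one 1 (hrlt hk)
  have e1 : ∀ j : ℕ, (((j + n : ℕ):ℝ) + 1) * x ^ (j + n + 1)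
      = x ^ (n+1) * (((n:ℝ) + 1) * x ^ j) + x ^ (n+1) * ((j:ℝ) * x ^ j) := by
    intro j
    rw [show j + n + 1 = j + (n + 1) from by ring, pow_add]
    push_cast; ring
  rw [tsum_congr e1, Summable.tsum_add ((hgeo.mul_left _).mul_left _) (hlin.mul_left _),
    tsum_mul_left, tsum_mul_left, tsum_mul_left,
    tsum_geometric_of_lt_one hx0 hx1, tsum_coe_mul_geometric_of_norm_lt_one (hrlt hk)]
  have hk0 : (k:ℝ) ≠ 0 := hkne hk
  have hk1 : (k:ℝ) - 1 ≠ 0 := by have := hk1R hk; intro h; nlinarith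
  have h1x : 1 - x = ((k:ℝ) - 1) / k := by rw [hx]; field_simp
  rw [h1x, hx]
  simp only [inv_pow]
  field_simp
  ring

lemma tail_le (hk : 2 ≤ k) (n : ℕ) :
    ∑' j : ℕ, fF k (j + n)
      ≤ (1 / (k : ℝ) ^ n) * (((k : ℝ) * (n + 1) - n) / ((k : ℝ) - 1) ^ 2) := by
  rw [← tail_sum hk n]
  apply Summable.tsum_le_tsum
  · intro j
    have := fF_le hk (j + n)
    refine this.trans_eq ?_
    push_cast; ring_nf
  · exact (summable_nat_add_iff n).2 (summable_fF hk)
  · have := (summable_nat_add_iff (f := fun j : ℕ => ((j:ℝ) + 1) * ((k:ℝ)⁻¹) ^ (j + 1)) n).2 (summable_g hk)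
    refine this.congr fun j => by push_cast; ring_nf

end Analysis

lemma sum_lso_real {k : ℕ} (hk : 2 ≤ k) (n : ℕ) (hn : 1 ≤ n) :
    (∑ p ∈ Words k n ×ˢ Words k n, (lso p.1 p.2 : ℝ)) / (k:ℝ)^(2*n)
      = ∑ j ∈ Finset.range (n-1), fF k j := by
  have hkne' : (k:ℝ) ≠ 0 := hkne hk
  have hcast : (∑ p ∈ Words k n ×ˢ Words k n, (lso p.1 p.2 : ℝ))
      = ∑ i ∈ Finset.range n, (i:ℝ) * ((UB k i:ℝ) * ((k:ℝ)^(n-i) * (k:ℝ)^(n-i))) := by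
    rw [← Nat.cast_sum, sum_lso k n hn]; push_cast; rfl
  rw [hcast, Finset.sum_div]
  have hterm : ∀ i ∈ Finset.range n,
      (i:ℝ) * ((UB k i:ℝ) * ((k:ℝ)^(n-i) * (k:ℝ)^(n-i))) / (k:ℝ)^(2*n)
        = (i:ℝ) * (UB k i:ℝ) / (k:ℝ)^(2*i) := by
    intro i hi
    rw [Finset.mem_range] at hi
    have hpow : (k:ℝ)^(2*n) = (k:ℝ)^(n-i) * (k:ℝ)^(n-i) * (k:ℝ)^(2*i) := by
      rw [← pow_add, ← pow_add]; congr 1; omega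
    rw [hpow]
    field_simp
  rw [Finset.sum_congr rfl hterm]
  obtain ⟨m, rfl⟩ : ∃ m, n = m + 1 := ⟨n - 1, by omega⟩
  rw [Finset.sum_range_succ']
  simp only [Nat.cast_zero, zero_mul, zero_div, add_zero]
  apply Finset.sum_congr (by simp)
  intro j _
  unfold fF
  push_cast
  ring

lemma icc_sum_eq {k : ℕ} (n : ℕ) :
    ∑ i ∈ Finset.Icc 1 n, (i : ℝ) * (UB k i : ℝ) / (k : ℝ) ^ (2 * i)
      = ∑ j ∈ Finset.range n, fF k j := by
  rw [← Finset.Ico_add_one_right_eq_Icc, Finset.sum_Ico_eq_sum_range]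
  apply Finset.sum_congr rfl
  intro j _
  unfold fF
  push_cast
  ring

theorem stmt17 (k : ℕ) (hk : 2 ≤ k) :
    Summable (fun i : ℕ => ((i + 1 : ℕ) : ℝ) * (UB k (i + 1) : ℝ) / (k : ℝ) ^ (2 * (i + 1))) ∧
    Filter.Tendsto
      (fun n : ℕ =>
        (∑ p ∈ Words k n ×ˢ Words k n, (lso p.1 p.2 : ℝ)) / (k : ℝ) ^ (2 * n))
      Filter.atTop
      (nhds (∑' i : ℕ, ((i + 1 : ℕ) : ℝ) * (UB k (i + 1) : ℝ) / (k : ℝ) ^ (2 * (i + 1)))) ∧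
    ∀ n : ℕ, 1 ≤ n →
      (∑ i ∈ Finset.Icc 1 n, (i : ℝ) * (UB k i : ℝ) / (k : ℝ) ^ (2 * i)) ≤
        (∑' i : ℕ, ((i + 1 : ℕ) : ℝ) * (UB k (i + 1) : ℝ) / (k : ℝ) ^ (2 * (i + 1))) ∧
      (∑' i : ℕ, ((i + 1 : ℕ) : ℝ) * (UB k (i + 1) : ℝ) / (k : ℝ) ^ (2 * (i + 1))) ≤
        (∑ i ∈ Finset.Icc 1 n, (i : ℝ) * (UB k i : ℝ) / (k : ℝ) ^ (2 * i)) +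
          (1 / (k : ℝ) ^ n) * (((k : ℝ) * (n + 1) - n) / ((k : ℝ) - 1) ^ 2) := by
  have hsum : Summable (fF k) := summable_fF hk
  refine ⟨hsum, ?_, ?_⟩
  · have hT : Tendsto (fun m => ∑ j ∈ Finset.range m, fF k j) atTop (nhds (∑' i, fF k i)) :=
      hsum.hasSum.tendsto_sum_nat
    have hT2 : Tendsto (fun n : ℕ => ∑ j ∈ Finset.range (n - 1), fF k j) atTop
        (nhds (∑' i, fF k i)) := hT.comp (tendsto_sub_atTop_nat 1)
    refine hT2.congr' ?_
    filter_upwards [eventually_ge_atTop 1] with n hn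
    exact (sum_lso_real hk n hn).symm
  · intro n hn
    constructor
    · rw [show (∑ i ∈ Finset.Icc 1 n, (i : ℝ) * (UB k i : ℝ) / (k : ℝ) ^ (2 * i))
          = ∑ j ∈ Finset.range n, fF k j from icc_sum_eq n]
      exact Summable.sum_le_tsum _ (fun i _ => fF_nonneg k i) hsum
    · have hdecomp := Summable.sum_add_tsum_nat_add (f := fF k) n hsum
      have htail := tail_le hk n
      rw [show (∑ i ∈ Finset.Icc 1 n, (i : ℝ) * (UB k i : ℝ) / (k : ℝ) ^ (2 * i))
          = ∑ j ∈ Finset.range n, fF k j from icc_sum_eq n]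
      have : (∑' i, fF k i) = (∑ j ∈ Finset.range n, fF k j) + ∑' j, fF k (j + n) :=
        hdecomp.symm
      rw [show (∑' i : ℕ, ((i + 1 : ℕ) : ℝ) * (UB k (i + 1) : ℝ) / (k : ℝ) ^ (2 * (i + 1)))
          = ∑' i, fF k i from rfl, this]
      linarith
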